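/- Let G be a finite simple connected graph, let u and v be vertices of G, and let a and b be non-negative integers. If N_a[u] ∩ N_b[v] = ∅ and |N_a[u] ∪ N_b[v]| < 2^{a+b+1}, then G is not Class 0, i.e., π(G) > n(G). -/

import Mathlib

namespace Pebbling

variable {V : Type*}

/-- A single pebbling move on configurations: remove two pebbles from `u`
(which must have at least two) and add one pebble to an adjacent vertex `w`. -/
def Move (G : SimpleGraph V) (C C' : V → ℕ) : Prop := by
  classical
  exact ∃ u w, G.Adj u w ∧ 2 ≤ C u ∧
    C' = Function.update (Function.update C u (C u - 2)) w (C w + 1)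

/-- A configuration `C` is `r`-solvable if some finite sequence of pebbling moves
starting from `C` produces a configuration with at least one pebble on `r`. -/
def Solvable (G : SimpleGraph V) (C : V → ℕ) (r : V) : Prop :=
  ∃ C', Relation.ReflTransGen (Move G) C C' ∧ 1 ≤ C' r

/-- The pebbling number `π(G, r)`: the least `t` such that every configuration of
size `t` is `r`-solvable. -/
noncomputable def pebblingNumberTo [Fintype V] (G : SimpleGraph V) (r : V) : ℕ :=
  sInf {t | ∀ C : V → ℕ, ∑ x, C x = t → Solvable G C r}

/-- The pebbling number `π(G)`: the maximum of `π(G, r)` over all vertices `r`. -/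
noncomputable def pebblingNumber [Fintype V] (G : SimpleGraph V) : ℕ :=
  Finset.univ.sup fun r => pebblingNumberTo G r

/-- A proper `n`-edge-coloring: a coloring of the edges with `n` colors such that
distinct edges sharing an endpoint receive different colors. -/
def HasProperEdgeColoring (G : SimpleGraph V) (n : ℕ) : Prop :=
  ∃ c : Sym2 V → Fin n, ∀ e₁ ∈ G.edgeSet, ∀ e₂ ∈ G.edgeSet,
    e₁ ≠ e₂ → (∃ x, x ∈ e₁ ∧ x ∈ e₂) → c e₁ ≠ c e₂

/-- A snark: a connected bridgeless cubic simple graph admitting no proper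
3-edge-coloring. -/
def IsSnark [Fintype V] (G : SimpleGraph V) [DecidableRel G.Adj] : Prop :=
  G.Connected ∧ (∀ v, G.degree v = 3) ∧ (∀ e, ¬ G.IsBridge e) ∧
    ¬ HasProperEdgeColoring G 3

/-! ### Auxiliary lemmas -/

open Classical in
lemma move_iff {G : SimpleGraph V} {C C' : V → ℕ} : Move G C C' ↔ ∃ p w, G.Adj p w ∧ 2 ≤ C p ∧
    C' = Function.update (Function.update C p (C p - 2)) w (C w + 1) := Iff.rfl

lemma move_mono {G : SimpleGraph V} {C C' D : V → ℕ} (h : Move G C C')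
    (hle : ∀ x, C x ≤ D x) : ∃ D', Move G D D' ∧ ∀ x, C' x ≤ D' x := by
  classical
  obtain ⟨p, w, hadj, h2, rfl⟩ := move_iff.mp h
  refine ⟨_, move_iff.mpr ⟨p, w, hadj, le_trans h2 (hle p), rfl⟩, ?_⟩
  intro x
  rcases eq_or_ne x w with rfl | hxw
  · simp only [Function.update_self]
    exact Nat.add_le_add_right (hle x) 1
  · simp only [Function.update_of_ne hxw]
    rcases eq_or_ne x p with rfl | hxp
    · simp only [Function.update_self]
      exact Nat.sub_le_sub_right (hle x) 2
    · simp only [Function.update_of_ne hxp]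
      exact hle x

lemma solvable_mono {G : SimpleGraph V} {C D : V → ℕ} {r : V} (h : Solvable G C r)
    (hle : ∀ x, C x ≤ D x) : Solvable G D r := by
  obtain ⟨C', hsteps, hr⟩ := h
  induction hsteps using Relation.ReflTransGen.head_induction_on generalizing D with
  | refl => exact ⟨D, Relation.ReflTransGen.refl, le_trans hr (hle r)⟩
  | head hmove _ ih =>
      obtain ⟨D', hmD, hle'⟩ := move_mono hmove hle
      obtain ⟨D'', hs, h1⟩ := ih hle'
      exact ⟨D'', Relation.ReflTransGen.head hmD hs, h1⟩

lemma solvable_of_step {G : SimpleGraph V} {C C' : V → ℕ} {r : V}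
    (h : Relation.ReflTransGen (Move G) C C') (hs : Solvable G C' r) : Solvable G C r := by
  obtain ⟨C'', hsteps, hr⟩ := hs
  exact ⟨C'', h.trans hsteps, hr⟩

open Classical in
/-- Performing `m` moves from `p` to `q` in a row. -/
lemma moves_pile {G : SimpleGraph V} {p q : V} (hadj : G.Adj p q) :
    ∀ (m : ℕ) (C : V → ℕ), 2 * m ≤ C p →
      Relation.ReflTransGen (Move G)
        C (Function.update (Function.update C p (C p - 2 * m)) q (C q + m)) := by
  intro m
  induction m with
  | zero =>
      intro C _
      have : Function.update (Function.update C p (C p - 2 * 0)) q (C q + 0) = C := by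
        funext x
        rcases eq_or_ne x q with rfl | hxq
        · simp
        · rcases eq_or_ne x p with rfl | hxp
          · simp [Function.update_of_ne hxq]
          · simp [Function.update_of_ne hxq, Function.update_of_ne hxp]
      rw [this]
  | succ m ih =>
      intro C hm
      set C₁ : V → ℕ := Function.update (Function.update C p (C p - 2)) q (C q + 1) with hC₁
      have hmove : Move G C C₁ := move_iff.mpr ⟨p, q, hadj, by omega, rfl⟩
      have hC₁p : C₁ p = C p - 2 := by
        simp [hC₁, Function.update_of_ne hadj.ne, Function.update_self]
      have hC₁q : C₁ q = C q + 1 := by simp [hC₁]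
      have hrec := ih C₁ (by omega)
      have heq : Function.update (Function.update C₁ p (C₁ p - 2 * m)) q (C₁ q + m)
          = Function.update (Function.update C p (C p - 2 * (m + 1))) q (C q + (m + 1)) := by
        funext x
        rcases eq_or_ne x q with rfl | hxq
        · simp [hC₁q]; omega
        · rcases eq_or_ne x p with rfl | hxp
          · simp [Function.update_of_ne hxq, Function.update_self, hC₁p]
            omega
          · simp [hC₁, Function.update_of_ne hxq, Function.update_of_ne hxp]
      rw [heq] at hrec
      exact Relation.ReflTransGen.head hmove hrec

lemma solvable_of_pile {G : SimpleGraph V} (hconn : G.Connected) {r : V} :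
    ∀ (k : ℕ) (x : V) (C : V → ℕ), G.dist x r ≤ k → 2 ^ k ≤ C x → Solvable G C r := by
  intro k
  induction k with
  | zero =>
      intro x C hd hc
      have : x = r := (hconn.dist_eq_zero_iff).mp (Nat.le_zero.mp hd)
      subst this
      exact ⟨C, Relation.ReflTransGen.refl, by simpa using hc⟩
  | succ k ih =>
      intro x C hd hc
      rcases eq_or_ne x r with rfl | hxr
      · exact ⟨C, Relation.ReflTransGen.refl, le_trans (Nat.one_le_two_pow) hc⟩
      · obtain ⟨p, hp⟩ := (hconn x r).exists_walk_length_eq_dist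
        cases p with
        | nil => exact absurd rfl hxr
        | @cons _ y _ hadj p' =>
            have hdy : G.dist y r ≤ k := by
              have h1 : G.dist y r ≤ p'.length := SimpleGraph.dist_le p'
              have h2 : p'.length + 1 = G.dist x r := by simpa using hp
              omega
            have hmoves := moves_pile hadj (2 ^ k) C (by rw [pow_succ] at hc; omega)
            apply solvable_of_step hmoves
            apply ih y _ hdy
            simp

lemma exists_solvable_size [Fintype V] {G : SimpleGraph V} (hconn : G.Connected) (r : V) :
    ∀ C : V → ℕ, ∑ x, C x = Fintype.card V * 2 ^ Fintype.card V + 1 → Solvable G C r := by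
  classical
  intro C hsum
  have hx : ∃ x, 2 ^ Fintype.card V ≤ C x := by
    by_contra hc
    push_neg at hc
    have hle : ∀ x ∈ Finset.univ, C x ≤ 2 ^ Fintype.card V - 1 := by
      intro x _
      have := hc x
      omega
    have := Finset.sum_le_card_nsmul Finset.univ C _ hle
    rw [hsum] at this
    simp only [Finset.card_univ, smul_eq_mul] at this
    have hpow : 1 ≤ 2 ^ Fintype.card V := Nat.one_le_two_pow
    nlinarith [Nat.mul_le_mul_left (Fintype.card V) (Nat.sub_le (2 ^ Fintype.card V) 1)]
  obtain ⟨x, hx⟩ := hx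
  have hd : G.dist x r ≤ Fintype.card V := by
    have hreach : G.Reachable x r := hconn x r
    let p : G.Path x r := hreach.some.toPath
    have := SimpleGraph.dist_le (p : G.Walk x r)
    have hlt : (p : G.Walk x r).length < Fintype.card V := p.2.length_lt
    omega
  exact solvable_of_pile hconn (Fintype.card V) x C hd hx

lemma exists_sub_sum [Fintype V] (C : V → ℕ) (t : ℕ) (h : t ≤ ∑ x, C x) :
    ∃ C' : V → ℕ, (∀ x, C' x ≤ C x) ∧ ∑ x, C' x = t := by
  classical
  obtain ⟨d, hd⟩ : ∃ d, ∑ x, C x = t + d := ⟨∑ x, C x - t, by omega⟩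
  clear h
  induction d generalizing C with
  | zero => exact ⟨C, fun _ => le_rfl, by omega⟩
  | succ d ih =>
      have hpos : ∃ x, 0 < C x := by
        by_contra hc
        push_neg at hc
        have : ∑ x, C x = 0 := Finset.sum_eq_zero (fun x _ => Nat.le_zero.mp (hc x))
        omega
      obtain ⟨x, hx⟩ := hpos
      have hsum : ∑ y, Function.update C x (C x - 1) y = t + d := by
        rw [Finset.sum_update_of_mem (Finset.mem_univ x), ← Finset.erase_eq]
        have := Finset.add_sum_erase Finset.univ C (Finset.mem_univ x)
        omega
      obtain ⟨C', h1, h2⟩ := ih _ hsum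
      refine ⟨C', fun y => le_trans (h1 y) ?_, h2⟩
      rcases eq_or_ne y x with rfl | hyx
      · simp
      · simp [Function.update_of_ne hyx]

/-- A "merge tree" witnessing a pebbling solution: a leaf at `x` is an original
pebble at `x`; a node at `x` with two subtrees rooted at `z` (adjacent to `x`)
represents merging two pebbles at `z` and moving one to `x`. -/
inductive PTree (G : SimpleGraph V) : V → Type _ where
  | leaf (x : V) : PTree G x
  | node (x z : V) (h : G.Adj z x) (t₁ t₂ : PTree G z) : PTree G x

namespace PTree

def leaves {G : SimpleGraph V} : ∀ {x : V}, PTree G x → Multiset V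
  | _, leaf y => {y}
  | _, node _ _ _ t₁ t₂ => t₁.leaves + t₂.leaves

open Classical in
/-- Replace one leaf at `w` by a node merging two new leaves at `p`. -/
noncomputable def graft {G : SimpleGraph V} (w p : V) (h : G.Adj p w) :
    ∀ {x : V}, PTree G x → PTree G x
  | _, leaf y => if hy : y = w then node y p (by rw [hy]; exact h) (leaf p) (leaf p) else leaf y
  | _, node x z hz t₁ t₂ =>
      if w ∈ t₁.leaves then node x z hz (graft w p h t₁) t₂
      else node x z hz t₁ (graft w p h t₂)

open Classical in
lemma leaves_graft {G : SimpleGraph V} (w p : V) (h : G.Adj p w) :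
    ∀ {x : V} (t : PTree G x), w ∈ t.leaves →
      (graft w p h t).leaves = p ::ₘ p ::ₘ t.leaves.erase w := by
  intro x t
  induction t with
  | leaf y =>
      intro hw
      have hyw : y = w := by
        simp only [leaves, Multiset.mem_singleton] at hw
        exact hw.symm
      subst hyw
      simp [graft, leaves]
  | node x z hz t₁ t₂ ih₁ ih₂ =>
      intro hw
      by_cases h1 : w ∈ t₁.leaves
      · rw [show graft w p h (node x z hz t₁ t₂)
            = node x z hz (graft w p h t₁) t₂ by simp [graft, h1]]
        simp only [leaves, ih₁ h1]
        rw [Multiset.erase_add_left_pos _ h1]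
        simp [Multiset.cons_add]
      · have h2 : w ∈ t₂.leaves := by
          simp only [leaves, Multiset.mem_add] at hw
          tauto
        rw [show graft w p h (node x z hz t₁ t₂)
            = node x z hz t₁ (graft w p h t₂) by simp [graft, h1]]
        simp only [leaves, ih₂ h2]
        rw [Multiset.erase_add_right_pos _ h2]
        simp [Multiset.add_cons]

end PTree

open Classical in
/-- From a solvable configuration one can extract a merge tree whose leaves are
bounded by the configuration. -/
lemma exists_tree_of_solvable {G : SimpleGraph V} {C : V → ℕ} {r : V}
    (h : Solvable G C r) : ∃ t : PTree G r, ∀ x, t.leaves.count x ≤ C x := by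
  classical
  obtain ⟨C', hsteps, hr⟩ := h
  induction hsteps using Relation.ReflTransGen.head_induction_on with
  | refl =>
      refine ⟨PTree.leaf r, fun x => ?_⟩
      rcases eq_or_ne x r with rfl | hxr
      · simpa [PTree.leaves] using hr
      · simp [PTree.leaves, Multiset.count_singleton, hxr]
  | @head C₀ C₁ hmove _ ih =>
      obtain ⟨t, ht⟩ := ih
      obtain ⟨p, q, hadj, h2, hC₁⟩ := move_iff.mp hmove
      have hpq : p ≠ q := hadj.ne
      have hC₁p : C₁ p = C₀ p - 2 := by
        rw [hC₁, Function.update_of_ne hpq, Function.update_self]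
      have hC₁q : C₁ q = C₀ q + 1 := by rw [hC₁, Function.update_self]
      have hC₁x : ∀ x, x ≠ p → x ≠ q → C₁ x = C₀ x := by
        intro x hxp hxq
        rw [hC₁, Function.update_of_ne hxq, Function.update_of_ne hxp]
      by_cases hq : t.leaves.count q ≤ C₀ q
      · refine ⟨t, fun x => ?_⟩
        rcases eq_or_ne x q with rfl | hxq
        · exact hq
        · rcases eq_or_ne x p with rfl | hxp
          · have := ht x; omega
          · have := ht x; rw [hC₁x x hxp hxq] at this; exact this
      · push_neg at hq
        have hqmem : q ∈ t.leaves := by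
          rw [← Multiset.count_pos]
          have := ht q
          omega
        refine ⟨PTree.graft q p hadj t, fun x => ?_⟩
        rw [PTree.leaves_graft q p hadj t hqmem]
        rcases eq_or_ne x p with rfl | hxp
        · rw [Multiset.count_cons_self, Multiset.count_cons_self,
              Multiset.count_erase_of_ne hpq]
          have := ht x
          omega
        · rw [Multiset.count_cons_of_ne hxp, Multiset.count_cons_of_ne hxp]
          rcases eq_or_ne x q with rfl | hxq
          · rw [Multiset.count_erase_self]
            have := ht x
            omega
          · rw [Multiset.count_erase_of_ne hxq]
            have := ht x
            rw [hC₁x x hxp hxq] at this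
            exact this

namespace PTree

def IsCouponLeaf {G : SimpleGraph V} (co : V → Prop) : ∀ {x : V}, PTree G x → Prop
  | _, leaf y => co y
  | _, node _ _ _ _ _ => False

lemma isCouponLeaf_iff {G : SimpleGraph V} (co : V → Prop) {z : V} {t : PTree G z} :
    IsCouponLeaf co t ↔ t = leaf z ∧ co z := by
  cases t <;> simp [IsCouponLeaf]

open Classical in
/-- The discounted Kraft weight of a merge tree: coupon leaves are deleted and
the sibling subtree of a coupon leaf is spliced in without the factor 1/2. -/
noncomputable def K {G : SimpleGraph V} (co : V → Prop) : ∀ {x : V}, PTree G x → ℚ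
  | _, leaf y => if co y then 0 else 1
  | _, node _ _ _ t₁ t₂ =>
      if IsCouponLeaf co t₁ then K co t₂
      else if IsCouponLeaf co t₂ then K co t₁
      else (K co t₁ + K co t₂) / 2

lemma K_nonneg {G : SimpleGraph V} (co : V → Prop) {x : V} (t : PTree G x) :
    0 ≤ K co t := by
  induction t with
  | leaf y =>
      rw [K]
      split <;> norm_num
  | node x z hz t₁ t₂ ih₁ ih₂ =>
      rw [K]
      split
      · exact ih₂
      · split
        · exact ih₁
        · linarith

open Classical in
lemma one_le_K {G : SimpleGraph V} (co : V → Prop) {x : V} (t : PTree G x)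
    (hcount : ∀ y, co y → t.leaves.count y ≤ 1)
    (hnot : ¬ IsCouponLeaf co t) : 1 ≤ K co t := by
  induction t with
  | leaf y =>
      have : ¬ co y := by simpa [IsCouponLeaf] using hnot
      simp [K, this]
  | node x z hz t₁ t₂ ih₁ ih₂ =>
      have hcount₁ : ∀ y, co y → t₁.leaves.count y ≤ 1 := by
        intro y hy
        have := hcount y hy
        simp only [leaves, Multiset.count_add] at this
        omega
      have hcount₂ : ∀ y, co y → t₂.leaves.count y ≤ 1 := by
        intro y hy
        have := hcount y hy
        simp only [leaves, Multiset.count_add] at this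
        omega
      have hnotboth : ¬ (IsCouponLeaf co t₁ ∧ IsCouponLeaf co t₂) := by
        rintro ⟨h1, h2⟩
        obtain ⟨e1, hz1⟩ := (isCouponLeaf_iff co).mp h1
        obtain ⟨e2, _⟩ := (isCouponLeaf_iff co).mp h2
        have := hcount z hz1
        rw [e1, e2] at this
        simp [leaves] at this
      by_cases h1 : IsCouponLeaf co t₁
      · have h2 : ¬ IsCouponLeaf co t₂ := fun h => hnotboth ⟨h1, h⟩
        rw [K, if_pos h1]
        exact ih₂ hcount₂ h2
      · by_cases h2 : IsCouponLeaf co t₂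
        · rw [K, if_neg h1, if_pos h2]
          exact ih₁ hcount₁ h1
        · rw [K, if_neg h1, if_neg h2]
          have := ih₁ hcount₁ h1
          have := ih₂ hcount₂ h2
          linarith

end PTree

/-- The "paid distance" weight used in the small-neighborhood argument. -/
noncomputable def gwt (G : SimpleGraph V) (u v : V) (a b : ℕ) (x : V) : ℕ :=
  min (G.dist v x) (b + 1) + (a - G.dist u x)

section SmallNbhd

variable {G : SimpleGraph V} {u v : V} {a b : ℕ}

lemma dist_adj_le {x z : V} (hconn : G.Connected) (h : G.Adj z x) (w : V) :
    G.dist w x ≤ G.dist w z + 1 := by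
  have h1 : G.dist z x = 1 := SimpleGraph.dist_eq_one_iff_adj.mpr h
  have := hconn.dist_triangle (u := w) (v := z) (w := x)
  omega

lemma gwt_adj (hconn : G.Connected)
    (hdisj : ∀ x, ¬ (G.dist u x ≤ a ∧ G.dist v x ≤ b))
    {x z : V} (h : G.Adj z x) : gwt G u v a b x ≤ gwt G u v a b z + 1 := by
  have h1 : G.dist v x ≤ G.dist v z + 1 := dist_adj_le hconn h v
  have h2 : G.dist u z ≤ G.dist u x + 1 := dist_adj_le hconn h.symm u
  have h3 := hdisj z
  unfold gwt
  omega

lemma gwt_coupon (hconn : G.Connected)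
    {x z : V} (h : G.Adj z x) (hz1 : ¬ G.dist u z ≤ a) (hz2 : ¬ G.dist v z ≤ b) :
    gwt G u v a b x ≤ gwt G u v a b z := by
  have h2 : G.dist u z ≤ G.dist u x + 1 := dist_adj_le hconn h.symm u
  unfold gwt
  omega

open Classical PTree in
lemma K_le (hconn : G.Connected)
    (hdisj : ∀ x, ¬ (G.dist u x ≤ a ∧ G.dist v x ≤ b))
    (hv : G.dist v v ≤ b) (hu : ¬ G.dist u v ≤ a)
    {x : V} (t : PTree G x)
    (hleaf : ∀ y ∈ t.leaves, y = v ∨ (¬ G.dist u y ≤ a ∧ ¬ G.dist v y ≤ b)) :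
    K (fun y => ¬ G.dist u y ≤ a ∧ ¬ G.dist v y ≤ b) t * 2 ^ gwt G u v a b x
      ≤ (t.leaves.count v : ℚ) := by
  set co : V → Prop := fun y => ¬ G.dist u y ≤ a ∧ ¬ G.dist v y ≤ b with hco
  induction t with
  | leaf y =>
      rcases hleaf y (by simp [leaves]) with rfl | hy
      · have hcov : ¬ co y := by simp [hco]
        rw [PTree.K, if_neg hcov]
        have hd : G.dist y y = 0 := SimpleGraph.dist_self
        have hg : gwt G u y a b y = 0 := by
          unfold gwt
          omega
        simp [leaves, hg]
      · have hcov : co y := hy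
        rw [PTree.K, if_pos hcov]
        simp
  | node x z hz t₁ t₂ ih₁ ih₂ =>
      have hleaf₁ : ∀ y ∈ t₁.leaves, y = v ∨ (¬ G.dist u y ≤ a ∧ ¬ G.dist v y ≤ b) := by
        intro y hy; exact hleaf y (by simp [leaves, Multiset.mem_add]; tauto)
      have hleaf₂ : ∀ y ∈ t₂.leaves, y = v ∨ (¬ G.dist u y ≤ a ∧ ¬ G.dist v y ≤ b) := by
        intro y hy; exact hleaf y (by simp [leaves, Multiset.mem_add]; tauto)
      have hKn₁ := PTree.K_nonneg co t₁
      have hKn₂ := PTree.K_nonneg co t₂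
      have hcount : (((node x z hz t₁ t₂).leaves).count v : ℚ)
          = (t₁.leaves.count v : ℚ) + (t₂.leaves.count v : ℚ) := by
        simp [leaves, Multiset.count_add]
      have hpow : (0:ℚ) < 2 ^ gwt G u v a b z := by positivity
      by_cases h1 : IsCouponLeaf co t₁
      · obtain ⟨he, hcz⟩ := (isCouponLeaf_iff co).mp h1
        have hgle : gwt G u v a b x ≤ gwt G u v a b z := gwt_coupon hconn hz hcz.1 hcz.2
        rw [PTree.K, if_pos h1, hcount]
        calc K co t₂ * 2 ^ gwt G u v a b x ≤ K co t₂ * 2 ^ gwt G u v a b z := by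
              apply mul_le_mul_of_nonneg_left _ hKn₂
              exact pow_le_pow_right₀ (by norm_num) hgle
          _ ≤ (t₂.leaves.count v : ℚ) := ih₂ hleaf₂
          _ ≤ _ := by
              have : (0:ℚ) ≤ (t₁.leaves.count v : ℚ) := by positivity
              linarith
      · by_cases h2 : IsCouponLeaf co t₂
        · obtain ⟨he, hcz⟩ := (isCouponLeaf_iff co).mp h2
          have hgle : gwt G u v a b x ≤ gwt G u v a b z := gwt_coupon hconn hz hcz.1 hcz.2
          rw [PTree.K, if_neg h1, if_pos h2, hcount]
          calc K co t₁ * 2 ^ gwt G u v a b x ≤ K co t₁ * 2 ^ gwt G u v a b z := by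
                apply mul_le_mul_of_nonneg_left _ hKn₁
                exact pow_le_pow_right₀ (by norm_num) hgle
            _ ≤ (t₁.leaves.count v : ℚ) := ih₁ hleaf₁
            _ ≤ _ := by
                have : (0:ℚ) ≤ (t₂.leaves.count v : ℚ) := by positivity
                linarith
        · have hgle : gwt G u v a b x ≤ gwt G u v a b z + 1 := gwt_adj hconn hdisj hz
          rw [PTree.K, if_neg h1, if_neg h2, hcount]
          have hle1 := ih₁ hleaf₁
          have hle2 := ih₂ hleaf₂
          calc (K co t₁ + K co t₂) / 2 * 2 ^ gwt G u v a b x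
              ≤ (K co t₁ + K co t₂) / 2 * 2 ^ (gwt G u v a b z + 1) := by
                apply mul_le_mul_of_nonneg_left _ (by linarith)
                exact pow_le_pow_right₀ (by norm_num) hgle
            _ = K co t₁ * 2 ^ gwt G u v a b z + K co t₂ * 2 ^ gwt G u v a b z := by
                rw [pow_succ]; ring
            _ ≤ _ := by linarith

end SmallNbhd

/-- if N_a[u] and N_b[v] are disjoint and |N_a[u] ∪ N_b[v]| < 2^(a+b+1),
then G is not Class 0, i.e. π(G) > n(G). -/
theorem small_neighborhoods_not_class0
    {V : Type*} [Fintype V] (G : SimpleGraph V)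
    (hconn : G.Connected) (u v : V) (a b : ℕ)
    (hdisj : {x | G.dist u x ≤ a} ∩ {x | G.dist v x ≤ b} = ∅)
    (hcard : ({x | G.dist u x ≤ a} ∪ {x | G.dist v x ≤ b}).ncard < 2 ^ (a + b + 1)) :
    Fintype.card V < pebblingNumber G := by
  classical
  have hdisj' : ∀ x, ¬ (G.dist u x ≤ a ∧ G.dist v x ≤ b) := by
    intro x hx
    have hmem : x ∈ ({x | G.dist u x ≤ a} ∩ {x | G.dist v x ≤ b} : Set V) := ⟨hx.1, hx.2⟩
    rw [hdisj] at hmem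
    exact hmem
  have hduu : G.dist u u = 0 := SimpleGraph.dist_self
  have hdvv : G.dist v v = 0 := SimpleGraph.dist_self
  have huA : G.dist u u ≤ a := by omega
  have hvB : G.dist v v ≤ b := by omega
  have hu : ¬ G.dist u v ≤ a := fun h => hdisj' v ⟨h, hvB⟩
  have huB : ¬ G.dist v u ≤ b := fun h => hdisj' u ⟨huA, h⟩
  set D : ℕ := a + b + 1 with hD
  set P : V → Prop := fun x => G.dist u x ≤ a ∨ G.dist v x ≤ b with hP
  set C₀ : V → ℕ := fun x => if x = v then 2 ^ D - 1 else if P x then 0 else 1 with hC₀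
  have hC₀v : C₀ v = 2 ^ D - 1 := by simp [hC₀]
  have hC₀P : ∀ x, x ≠ v → P x → C₀ x = 0 := by
    intro x hxv hx
    simp [hC₀, hxv, hx]
  have hC₀O : ∀ x, ¬ P x → C₀ x = 1 := by
    intro x hx
    have hxv : x ≠ v := by
      intro h
      exact hx (h ▸ Or.inr hvB)
    simp [hC₀, hxv, hx]
  -- the size of C₀ is at least the number of vertices
  have hcard' : (Finset.univ.filter P).card ≤ 2 ^ D - 1 := by
    have h1 : ({x | G.dist u x ≤ a} ∪ {x | G.dist v x ≤ b} : Set V) = {x | P x} := by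
      ext x
      simp [hP, Set.mem_union]
    rw [h1] at hcard
    have h2 : ({x | P x} : Set V).ncard = ({x | P x} : Set V).toFinset.card :=
      Set.ncard_eq_toFinset_card' _
    have h3 : ({x | P x} : Set V).toFinset = Finset.univ.filter P := by
      ext x
      simp
    rw [h2, h3] at hcard
    omega
  have hsize : Fintype.card V ≤ ∑ x, C₀ x := by
    have hsplit := Finset.sum_filter_add_sum_filter_not Finset.univ P C₀
    have hA : ∑ x ∈ Finset.univ.filter P, C₀ x
        = ∑ x ∈ Finset.univ.filter P, (if x = v then 2 ^ D - 1 else 0) := by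
      apply Finset.sum_congr rfl
      intro x hx
      rcases eq_or_ne x v with rfl | hxv
      · simp [hC₀v]
      · rw [hC₀P x hxv (by simpa using hx), if_neg hxv]
    have hvmem : v ∈ Finset.univ.filter P := by
      simp [hP, hvB]
    have hA2 : ∑ x ∈ Finset.univ.filter P, (if x = v then 2 ^ D - 1 else 0) = 2 ^ D - 1 := by
      rw [Finset.sum_ite_eq' (Finset.univ.filter P) v (fun _ => 2 ^ D - 1), if_pos hvmem]
    have hB : ∑ x ∈ Finset.univ.filter (fun x => ¬ P x), C₀ x
        = (Finset.univ.filter (fun x => ¬ P x)).card := by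
      rw [Finset.card_eq_sum_ones]
      apply Finset.sum_congr rfl
      intro x hx
      exact hC₀O x (by simpa using hx)
    have hcards : (Finset.univ.filter P).card + (Finset.univ.filter (fun x => ¬ P x)).card
        = Fintype.card V := by
      rw [← Finset.card_univ]
      exact Finset.card_filter_add_card_filter_not ..
    have htot : ∑ x, C₀ x = (2 ^ D - 1) + (Finset.univ.filter (fun x => ¬ P x)).card := by
      rw [← hsplit, hA, hA2, hB]
    omega
  -- C₀ is not u-solvable
  have hunsolv : ¬ Solvable G C₀ u := by
    intro hs
    obtain ⟨t, ht⟩ := exists_tree_of_solvable hs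
    set co : V → Prop := fun y => ¬ G.dist u y ≤ a ∧ ¬ G.dist v y ≤ b with hco
    have hleaf : ∀ y ∈ PTree.leaves t, y = v ∨ (¬ G.dist u y ≤ a ∧ ¬ G.dist v y ≤ b) := by
      intro y hy
      rcases eq_or_ne y v with rfl | hyv
      · exact Or.inl rfl
      · right
        by_contra hcon
        have hPy : P y := by
          simp only [hP]
          tauto
        have h1 : 1 ≤ (PTree.leaves t).count y := Multiset.one_le_count_iff_mem.mpr hy
        have h2 := ht y
        rw [hC₀P y hyv hPy] at h2
        omega
    have hcount : ∀ y, co y → (PTree.leaves t).count y ≤ 1 := by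
      intro y hy
      have h2 := ht y
      obtain ⟨hy1, hy2⟩ := hy
      have hPy : ¬ P y := by
        simp only [hP]
        push_neg
        exact ⟨by omega, by omega⟩
      rw [hC₀O y hPy] at h2
      exact h2
    have hnot : ¬ PTree.IsCouponLeaf co t := by
      rw [PTree.isCouponLeaf_iff]
      rintro ⟨_, hcu⟩
      exact hcu.1 huA
    have h1 := PTree.one_le_K co t hcount hnot
    have h2 := K_le hconn hdisj' hvB hu t hleaf
    have hgu : gwt G u v a b u = D := by
      unfold gwt
      omega
    have hcv : (PTree.leaves t).count v ≤ 2 ^ D - 1 := by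
      have := ht v
      omega
    rw [hgu] at h2
    have hpow : (1:ℕ) ≤ 2 ^ D := Nat.one_le_two_pow
    have hcast : ((2 ^ D - 1 : ℕ) : ℚ) = (2 ^ D : ℚ) - 1 := by
      push_cast [hpow]
      ring
    have h3 : (((PTree.leaves t).count v : ℕ) : ℚ) ≤ (2 ^ D : ℚ) - 1 := by
      rw [← hcast]
      exact_mod_cast hcv
    have h4 : (2 ^ D : ℚ) ≤ PTree.K co t * 2 ^ D := by
      nlinarith [pow_pos (show (0:ℚ) < 2 by norm_num) D]
    have : PTree.K co t * 2 ^ D ≤ (2 ^ D : ℚ) - 1 := le_trans h2 h3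
    nlinarith
  -- conclude
  have hSne : {t | ∀ C : V → ℕ, ∑ x, C x = t → Solvable G C u}.Nonempty :=
    ⟨_, fun C h => exists_solvable_size hconn u C h⟩
  have hmem := Nat.sInf_mem hSne
  have hgt : Fintype.card V < pebblingNumberTo G u := by
    rw [pebblingNumberTo]
    by_contra hle
    push_neg at hle
    obtain ⟨C', hC'le, hC'sum⟩ := exists_sub_sum C₀ _ (le_trans hle hsize)
    exact hunsolv (solvable_mono (hmem C' hC'sum) hC'le)
  calc Fintype.card V < pebblingNumberTo G u := hgt
    _ ≤ pebblingNumber G := Finset.le_sup (Finset.mem_univ u)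

end Pebbling
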